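/- Let Λ = ℚ[p_1, p_2, …] be the polynomial ring over ℚ in countably many variables p_k indexed by positive integers. Define h_m ∈ Λ by h_0 = 1 and m·h_m = Σ_{i=1}^m p_i·h_{m−i} for m ≥ 1; let D_1 be the unique ℚ-linear derivation of Λ with D_1(p_k) = k for all k ≥ 1; and for r ∈ ℕ let ε_r : Λ → ℚ be the ℚ-algebra homomorphism with ε_r(p_k) = r. Then for all h ≥ 1, m ≥ 0 and r ≥ 1, ε_r(D_1^h(h_m)) = C(r+m−1, r+h−1), where C(·,·) is the binomial coefficient. -/

import Mathlib

open MvPolynomial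

/-- The derivation `D_1` of `Λ = ℚ[p_1, p_2, …]` with `D_1(p_k) = k` for all `k ≥ 1`. -/
noncomputable def D1 : Derivation ℚ (MvPolynomial ℕ+ ℚ) (MvPolynomial ℕ+ ℚ) :=
  mkDerivation ℚ fun k : ℕ+ => C (((k : ℕ) : ℚ))

/-- The `ℚ`-algebra homomorphism `ε_r : Λ → ℚ` with `ε_r(p_k) = r` for all `k ≥ 1`. -/
noncomputable def epsHom (r : ℚ) : MvPolynomial ℕ+ ℚ →ₐ[ℚ] ℚ :=
  aeval fun _ : ℕ+ => r

lemma D1_X (k : ℕ+) : D1 (X k) = C ((k : ℕ) : ℚ) := mkDerivation_X _ _ _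

/-- Hockey stick, column version. -/
lemma sum_range_choose_col (N K : ℕ) :
    ∑ n ∈ Finset.range N, n.choose K = N.choose (K + 1) := by
  induction N with
  | zero => simp
  | succ N ih =>
    rw [Finset.sum_range_succ, ih, Nat.choose_succ_succ, Nat.add_comm]

lemma hock (r m K : ℕ) (hr : 1 ≤ r) (hK : r - 1 ≤ K) :
    ∑ j ∈ Finset.range m, (r + j - 1).choose K = (r + m - 1).choose (K + 1) := by
  have h1 : ∀ j, r + j - 1 = (r - 1) + j := by intro j; omega
  calc ∑ j ∈ Finset.range m, (r + j - 1).choose K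
      = ∑ j ∈ Finset.Ico (r-1) (r-1+m), j.choose K := by
        rw [Finset.sum_Ico_eq_sum_range]
        apply Finset.sum_congr (by congr 1; omega) fun j _ => by congr 1; omega
    _ = ∑ j ∈ Finset.range (r-1+m), j.choose K := by
        rw [Finset.range_eq_Ico, ← Finset.sum_Ico_consecutive _ (Nat.zero_le (r-1)) (Nat.le_add_right _ m)]
        have : ∑ j ∈ Finset.Ico 0 (r-1), j.choose K = 0 := by
          apply Finset.sum_eq_zero; intro j hj
          simp only [Finset.mem_Ico] at hj
          exact Nat.choose_eq_zero_of_lt (by omega)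
        rw [this, zero_add]
    _ = (r + m - 1).choose (K + 1) := by rw [sum_range_choose_col]; congr 1; omega

lemma nat_id (r m : ℕ) (hr : 1 ≤ r) (hm : 1 ≤ m) :
    m * (r + m - 1).choose m = r * (r + m - 1).choose r := by
  obtain ⟨r', rfl⟩ : ∃ r', r = r' + 1 := ⟨r - 1, by omega⟩
  obtain ⟨m', rfl⟩ : ∃ m', m = m' + 1 := ⟨m - 1, by omega⟩
  have e1 : r' + 1 + (m' + 1) - 1 = (r' + m') + 1 := by omega
  rw [e1]
  have h1 := Nat.add_one_mul_choose_eq (r' + m') m'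
  have h2 := Nat.add_one_mul_choose_eq (r' + m') r'
  have h3 : (r' + m').choose m' = (r' + m').choose r' := by
    rw [← Nat.choose_symm (Nat.le_add_left m' r')]
    congr 1; omega
  rw [h3] at h1
  have h4 := h1.symm.trans h2
  ring_nf at h4 ⊢
  linarith [h4]


lemma D1_H (H : ℕ → MvPolynomial ℕ+ ℚ) (H0 : H 0 = 1)
    (Hrec : ∀ m : ℕ, 1 ≤ m → (m : ℚ) • H m =
      ∑ i ∈ Finset.range m, X i.succPNat * H (m - (i + 1))) :
    ∀ m, D1 (H m) = ∑ j ∈ Finset.range m, H j := by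
  intro m
  induction m using Nat.strong_induction_on with
  | _ m ih =>
    match m with
    | 0 => rw [H0]; simp
    | (n+1) =>
      set M := n + 1 with hMdef
      have hM : 1 ≤ M := Nat.le_add_left 1 n
      clear_value M
      have hMQ : (M : ℚ) ≠ 0 := Nat.cast_ne_zero.mpr (by omega)
      have key : (M:ℚ) • D1 (H M) = (M:ℚ) • ∑ j ∈ Finset.range M, H j := by calc
        (M:ℚ) • D1 (H M) = D1 ((M:ℚ) • H M) := (D1.map_smul _ _).symm
        _ = D1 (∑ i ∈ Finset.range M, X i.succPNat * H (M - (i + 1))) := by rw [Hrec M hM]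
        _ = ∑ i ∈ Finset.range M,
              (X i.succPNat * D1 (H (M - (i + 1)))
                + C ((i.succPNat : ℕ) : ℚ) * H (M - (i + 1))) := by
            rw [map_sum]
            refine Finset.sum_congr rfl fun i hi => ?_
            rw [Derivation.leibniz, D1_X]
            simp only [smul_eq_mul]
            ring
        _ = (∑ i ∈ Finset.range M, ∑ j ∈ Finset.range (M - (i+1)), X i.succPNat * H j)
            + ∑ i ∈ Finset.range M, C ((i.succPNat : ℕ) : ℚ) * H (M - (i + 1)) := by
            rw [← Finset.sum_add_distrib]
            refine Finset.sum_congr rfl fun i hi => ?_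
            rw [ih (M - (i+1)) (by omega), Finset.mul_sum]
        _ = (∑ k ∈ Finset.range M, (k:ℚ) • H k)
            + ∑ i ∈ Finset.range M, ((M - i : ℕ) : ℚ) • H i := by
            congr 1
            · -- double sum reindexing
              have inner : ∀ k ∈ Finset.range M,
                  (k:ℚ) • H k = ∑ i ∈ Finset.range k, X i.succPNat * H (k - (i+1)) := by
                intro k hk
                rcases Nat.eq_zero_or_pos k with rfl | hkpos
                · simp
                · exact Hrec k hkpos
              rw [Finset.sum_congr rfl inner,
                Finset.sum_sigma' (Finset.range M) (fun i => Finset.range (M - (i+1)))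
                    (fun i j => X i.succPNat * H j),
                Finset.sum_sigma' (Finset.range M) (fun k => Finset.range k)
                    (fun k i => X i.succPNat * H (k - (i+1)))]
              refine Finset.sum_nbij' (fun p => ⟨p.1 + p.2 + 1, p.1⟩)
                (fun p => ⟨p.2, p.1 - (p.2 + 1)⟩) ?_ ?_ ?_ ?_ ?_
              · rintro ⟨i, j⟩ hp
                simp only [Finset.mem_sigma, Finset.mem_range] at hp ⊢
                omega
              · rintro ⟨k, i⟩ hp
                simp only [Finset.mem_sigma, Finset.mem_range] at hp ⊢
                omega
              · rintro ⟨i, j⟩ hp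
                simp only [Finset.mem_sigma, Finset.mem_range] at hp
                simp only [Sigma.mk.inj_iff, heq_eq_eq]
                exact ⟨trivial, by omega⟩
              · rintro ⟨k, i⟩ hp
                simp only [Finset.mem_sigma, Finset.mem_range] at hp
                simp only [Sigma.mk.inj_iff, heq_eq_eq]
                exact ⟨by omega, trivial⟩
              · rintro ⟨i, j⟩ hp
                simp only [Finset.mem_sigma, Finset.mem_range] at hp
                have e : i + j + 1 - (i + 1) = j := by omega
                simp [e]
            · conv_rhs => rw [← Finset.sum_range_reflect]
              refine Finset.sum_congr rfl fun i hi => ?_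
              simp only [Finset.mem_range] at hi
              have e1 : M - (M - 1 - i) = i + 1 := by omega
              have e2 : M - (i+1) = M - 1 - i := by omega
              rw [e1, e2, MvPolynomial.smul_eq_C_mul]
              simp [Nat.succPNat_coe]
        _ = (M:ℚ) • ∑ j ∈ Finset.range M, H j := by
            rw [Finset.smul_sum, ← Finset.sum_add_distrib]
            refine Finset.sum_congr rfl fun i hi => ?_
            simp only [Finset.mem_range] at hi
            rw [← add_smul]
            congr 1
            push_cast [Nat.cast_sub (le_of_lt hi)]
            ring
      have key2 := congrArg (fun x => (M:ℚ)⁻¹ • x) key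
      simpa [smul_smul, inv_mul_cancel₀ hMQ] using key2

lemma eps_H (H : ℕ → MvPolynomial ℕ+ ℚ) (H0 : H 0 = 1)
    (Hrec : ∀ m : ℕ, 1 ≤ m → (m : ℚ) • H m =
      ∑ i ∈ Finset.range m, X i.succPNat * H (m - (i + 1)))
    (r : ℕ) (hr : 1 ≤ r) :
    ∀ m, epsHom (r : ℚ) (H m) = ((r + m - 1).choose m : ℚ) := by
  intro m
  induction m using Nat.strong_induction_on with
  | _ m ih =>
    match m with
    | 0 => rw [H0]; simp
    | (n+1) =>
      set M := n + 1 with hMdef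
      have hM : 1 ≤ M := Nat.le_add_left 1 n
      clear_value M
      have hMQ : (M : ℚ) ≠ 0 := Nat.cast_ne_zero.mpr (by omega)
      have hsum : ∑ i ∈ Finset.range M, (r + (M - (i+1)) - 1).choose (M - (i+1))
          = (r + M - 1).choose r := by
        calc ∑ i ∈ Finset.range M, (r + (M - (i+1)) - 1).choose (M - (i+1))
            = ∑ i ∈ Finset.range M, (r + (M-1-i) - 1).choose (M-1-i) :=
              Finset.sum_congr rfl fun i hi => by rw [show M - (i+1) = M-1-i by omega]
          _ = ∑ j ∈ Finset.range M, (r + j - 1).choose j := Finset.sum_range_reflect (fun j => (r + j - 1).choose j) M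
          _ = ∑ j ∈ Finset.range M, (j + (r-1)).choose (r-1) := by
              refine Finset.sum_congr rfl fun j hj => ?_
              rw [show r + j - 1 = j + (r-1) by omega,
                ← Nat.choose_symm (Nat.le_add_left (r-1) j), Nat.add_sub_cancel]
          _ = (r + M - 1).choose r := by
              have h2 := Nat.sum_range_add_choose (M-1) (r-1)
              rw [show M-1+1 = M by omega] at h2
              rw [h2]
              congr 1 <;> omega
      have key := congrArg (epsHom (r:ℚ)) (Hrec M hM)
      simp only [map_smul, map_sum, map_mul, smul_eq_mul] at key
      have hterm : ∀ i ∈ Finset.range M,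
          epsHom (r:ℚ) (X i.succPNat) * epsHom (r:ℚ) (H (M - (i+1)))
            = (r:ℚ) * (((r + (M - (i+1)) - 1).choose (M - (i+1)) : ℕ) : ℚ) := by
        intro i hi
        rw [ih _ (by omega)]
        congr 1
        simp [epsHom]
      rw [Finset.sum_congr rfl hterm, ← Finset.mul_sum, ← Nat.cast_sum, hsum] at key
      have cast_id : (M:ℚ) * (((r + M - 1).choose M : ℕ) : ℚ)
          = (r:ℚ) * (((r + M - 1).choose r : ℕ) : ℚ) := by
        exact_mod_cast congrArg (Nat.cast (R := ℚ)) (nat_id r M hr hM)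
      exact mul_left_cancel₀ hMQ (key.trans cast_id.symm)

lemma main_aux (H : ℕ → MvPolynomial ℕ+ ℚ) (H0 : H 0 = 1)
    (Hrec : ∀ m : ℕ, 1 ≤ m → (m : ℚ) • H m =
      ∑ i ∈ Finset.range m, X i.succPNat * H (m - (i + 1)))
    (r : ℕ) (hr : 1 ≤ r) :
    ∀ h m : ℕ, epsHom (r : ℚ) ((D1.toLinearMap ^ h) (H m))
      = ((r + m - 1).choose (r + h - 1) : ℚ) := by
  intro h
  induction h with
  | zero =>
    intro m
    simp only [pow_zero, Module.End.one_apply]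
    rw [eps_H H H0 Hrec r hr m]
    have h1 : r + m - 1 - (r-1) = m := by omega
    have h2 := Nat.choose_symm (show r - 1 ≤ r + m - 1 by omega)
    rw [h1] at h2
    have h3 : (r + m - 1).choose m = (r + m - 1).choose (r + 0 - 1) := by
      rw [h2]; norm_num
    rw [h3]
  | succ h ih =>
    intro m
    have hp : (D1.toLinearMap ^ (h+1)) (H m) = (D1.toLinearMap ^ h) (D1 (H m)) := by
      rw [pow_succ, Module.End.mul_apply]
      rfl
    rw [hp, D1_H H H0 Hrec m, map_sum, map_sum,
      Finset.sum_congr rfl (fun j _ => ih j), ← Nat.cast_sum,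
      hock r m (r+h-1) hr (by omega)]
    congr 2
    omega

/-- If `h_0 = 1` and `m·h_m = Σ_{i=1}^m p_i·h_{m-i}` for `m ≥ 1`, then for all `h ≥ 1`,
`m ≥ 0`, `r ≥ 1`, `ε_r(D_1^h(h_m)) = C(r+m-1, r+h-1)`. -/
theorem stmt12 (H : ℕ → MvPolynomial ℕ+ ℚ) (H0 : H 0 = 1)
    (Hrec : ∀ m : ℕ, 1 ≤ m → (m : ℚ) • H m =
      ∑ i ∈ Finset.range m, X i.succPNat * H (m - (i + 1)))
    (h m r : ℕ) (hh : 1 ≤ h) (hr : 1 ≤ r) :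
    epsHom (r : ℚ) ((D1.toLinearMap ^ h) (H m)) = ((r + m - 1).choose (r + h - 1) : ℚ) :=
  main_aux H H0 Hrec r hr h m
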